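/- Let φ_i be a normalized eigenfunction of T with eigenvalue λ_i, and φ̃_j a normalized eigenfunction of T̃ with eigenvalue λ̃_j. Then λ_i − λ̃_j = E(φ̃_j∘ξ − φ_i) − (1 − λ_i)‖φ̃_j∘ξ − φ_i‖²_μ, where E is the Dirichlet energy of the full dynamics. -/
import Mathlib


open RealInnerProductSpace

/-- Let `φ_i` be a normalized eigenfunction of `T` with eigenvalue `λ_i`
and `φ̃_j` a normalized eigenfunction of the effective operator `T̃` with eigenvalue `λ̃_j`,
where the lifting `J : L²_{μ̃} → L²_μ`, `f̃ ↦ f̃∘ξ`, is a linear isometry compatible with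
the Dirichlet energies. Then
`λ_i - λ̃_j = E(φ̃_j∘ξ - φ_i) - (1 - λ_i)‖φ̃_j∘ξ - φ_i‖²_μ`,
with `E(f) = ⟨(I-T)f, f⟩_μ`. -/
theorem eigenvalue_difference_formula {H Ht : Type*}
    [NormedAddCommGroup H] [InnerProductSpace ℝ H] [CompleteSpace H]
    [NormedAddCommGroup Ht] [InnerProductSpace ℝ Ht] [CompleteSpace Ht]
    (T : H →L[ℝ] H) (Tt : Ht →L[ℝ] Ht)
    (hT : IsSelfAdjoint T) (hTt : IsSelfAdjoint Tt)
    (J : Ht →ₗᵢ[ℝ] H)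
    (hcompat : ∀ g : Ht, ⟪J g - T (J g), J g⟫ = ⟪g - Tt g, g⟫)
    (lami lamtj : ℝ) (φi : H) (φtj : Ht)
    (heig : T φi = lami • φi) (hnorm : ‖φi‖ = 1)
    (heigt : Tt φtj = lamtj • φtj) (hnormt : ‖φtj‖ = 1) :
    lami - lamtj
      = ⟪(J φtj - φi) - T (J φtj - φi), J φtj - φi⟫
        - (1 - lami) * ‖J φtj - φi‖ ^ 2 := by
  set u := J φtj with hu
  have hsym : ∀ x y : H, ⟪T x, y⟫ = ⟪x, T y⟫ := fun x y =>
    hT.isSymmetric x y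
  have hnu : ‖u‖ = 1 := by rw [hu, J.norm_map, hnormt]
  have h1 : ⟪u - T u, u⟫ = 1 - lamtj := by
    rw [hu, hcompat, heigt, inner_sub_left, real_inner_smul_left,
      real_inner_self_eq_norm_sq, hnormt]
    ring
  have ha : ⟪T u, φi⟫ = lami * ⟪u, φi⟫ := by
    rw [hsym, heig, real_inner_smul_right]
  have hb : ⟪T φi, u⟫ = lami * ⟪φi, u⟫ := by
    rw [heig, real_inner_smul_left]
  have hc : ⟪φi - T φi, φi⟫ = 1 - lami := by
    rw [inner_sub_left, heig, real_inner_smul_left,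
      real_inner_self_eq_norm_sq, hnorm]
    ring
  have hnormsq : ‖u - φi‖ ^ 2 = 1 - 2 * ⟪u, φi⟫ + 1 := by
    rw [norm_sub_sq_real, hnu, hnorm]; ring
  have hTexp : T (u - φi) = T u - T φi := map_sub T u φi
  have hswap : ⟪φi, u⟫ = ⟪u, φi⟫ := real_inner_comm _ _
  rw [hTexp]
  have hexp : ⟪(u - φi) - (T u - T φi), u - φi⟫
      = ⟪u - T u, u⟫ - ⟪T u, φi⟫ - ⟪u, φi⟫ + ⟪T u, φi⟫ + ⟪u, φi⟫
        - ⟪u - T u, φi⟫ - ⟪φi - T φi, u⟫ + ⟪φi - T φi, φi⟫ := by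
    simp only [inner_sub_left, inner_sub_right]
    ring
  rw [hexp, hnormsq]
  have hd : ⟪u - T u, φi⟫ = ⟪u, φi⟫ - lami * ⟪u, φi⟫ := by
    rw [inner_sub_left, ha]
  have he : ⟪φi - T φi, u⟫ = ⟪u, φi⟫ - lami * ⟪u, φi⟫ := by
    rw [inner_sub_left, hb, hswap]
  rw [h1, hc, hd, he]
  ring
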